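/- Let U and D be disjoint subsets of [2, n−1] and π ∈ S_n. Then π possesses a single reduced word simultaneously accepted by all automata U(j) for j ∈ U and D(j) for j ∈ D if and only if π avoids the patterns jki for all j ∈ U and kij for all j ∈ D (with i < j < k). -/

import Mathlib

/-- The permutation of `ℕ` given by a word in the adjacent transpositions. -/
def wordProd (L : List ℕ) : Equiv.Perm ℕ :=
  (L.map (fun m => Equiv.swap m (m + 1))).prod

/-- `L` is a reduced word of `π ∈ S_n`. -/
def IsRWord (n : ℕ) (π : Equiv.Perm ℕ) (L : List ℕ) : Prop :=
  (∀ m ∈ L, m ∈ Finset.Icc 1 (n - 1)) ∧ wordProd L = π ∧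
    ∀ L' : List ℕ, (∀ m ∈ L', m ∈ Finset.Icc 1 (n - 1)) → wordProd L' = π →
      L.length ≤ L'.length

/-- States of the permutree-sorting automata. -/
inductive AState : Type
  | healthy (m : ℕ) : AState
  | ill (m : ℕ) : AState
  | dead : AState
deriving DecidableEq

/-- Transition function of the automaton `𝕌(j)`. -/
def Ustep : AState → ℕ → AState
  | .healthy m, x =>
      if x = m then .healthy (m + 1) else if x + 1 = m then .ill m else .healthy m
  | .ill m, x => if x = m then .dead else .ill m
  | .dead, _ => .dead

/-- The state reached by `𝕌(j)` after reading `L`, starting at the healthy state `j`. -/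
def Urun (j : ℕ) (L : List ℕ) : AState := L.foldl Ustep (.healthy j)

/-- Transition function of the mirror automaton `𝔻(j)`: at the healthy state `m`,
reading `s_{m-1}` advances to the healthy state `m-1`, reading `s_m` moves to the ill
state `m`, from which reading `s_{m-1}` leads to the dead state; other letters loop. -/
def Dstep : AState → ℕ → AState
  | .healthy m, x =>
      if x + 1 = m then .healthy x else if x = m then .ill m else .healthy m
  | .ill m, x => if x + 1 = m then .dead else .ill m
  | .dead, _ => .dead

/-- The state reached by `𝔻(j)` after reading `L`, starting at the healthy state `j`. -/
def Drun (j : ℕ) (L : List ℕ) : AState := L.foldl Dstep (.healthy j)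

/-- abbreviation for the adjacent transposition. -/
def sw (i : ℕ) : Equiv.Perm ℕ := Equiv.swap i (i + 1)

theorem Equiv.Perm.inv_apply_self {α : Type*} (f : Equiv.Perm α) (x : α) : f⁻¹ (f x) = x :=
  f.symm_apply_apply x

theorem Equiv.Perm.apply_inv_self {α : Type*} (f : Equiv.Perm α) (x : α) : f (f⁻¹ x) = x :=
  f.apply_symm_apply x

lemma wordProd_nil : wordProd [] = 1 := rfl

lemma wordProd_cons (i : ℕ) (L : List ℕ) : wordProd (i :: L) = sw i * wordProd L := by
  simp [wordProd, sw]

/-- `π` is supported on `[1, n]`. -/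
def Supp (n : ℕ) (π : Equiv.Perm ℕ) : Prop := ∀ x, x ∉ Finset.Icc 1 n → π x = x

lemma supp_apply_mem {n : ℕ} {π : Equiv.Perm ℕ} (hs : Supp n π) {x : ℕ}
    (h1 : 1 ≤ x) (h2 : x ≤ n) : 1 ≤ π x ∧ π x ≤ n := by
  by_contra h
  have hx : π x ∉ Finset.Icc 1 n := by
    simp only [Finset.mem_Icc]; omega
  have := hs _ hx
  have : π x = x := π.injective this
  simp only [Finset.mem_Icc] at hx; omega

lemma supp_inv {n : ℕ} {π : Equiv.Perm ℕ} (hs : Supp n π) : Supp n π⁻¹ := by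
  intro x hx
  have h := hs x hx
  calc π⁻¹ x = π⁻¹ (π x) := by rw [h]
  _ = x := π.inv_apply_self x

lemma supp_inv_apply_mem {n : ℕ} {π : Equiv.Perm ℕ} (hs : Supp n π) {x : ℕ}
    (h1 : 1 ≤ x) (h2 : x ≤ n) : 1 ≤ π⁻¹ x ∧ π⁻¹ x ≤ n :=
  supp_apply_mem (supp_inv hs) h1 h2

lemma supp_one (n : ℕ) : Supp n (1 : Equiv.Perm ℕ) := fun _ _ => rfl

lemma sw_apply (i x : ℕ) : sw i x = if x = i then i + 1 else if x = i + 1 then i else x := by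
  simp [sw, Equiv.swap_apply_def]

lemma supp_sw_mul {n : ℕ} {π : Equiv.Perm ℕ} (hs : Supp n π) {i : ℕ}
    (h1 : 1 ≤ i) (h2 : i + 1 ≤ n) : Supp n (sw i * π) := by
  intro x hx
  have h := hs x hx
  simp only [Finset.mem_Icc] at hx
  rw [Equiv.Perm.mul_apply, h, sw_apply]
  split_ifs with e1 e2 <;> omega

lemma sw_sw_mul (i : ℕ) (π : Equiv.Perm ℕ) : sw i * (sw i * π) = π := by
  rw [← mul_assoc]
  simp [sw, Equiv.swap_mul_self]

lemma sw_mul_inv_apply (i x : ℕ) (π : Equiv.Perm ℕ) :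
    (sw i * π)⁻¹ x = π⁻¹ (sw i x) := by
  simp [mul_inv_rev, sw, Equiv.swap_inv, Equiv.Perm.mul_apply]

lemma sw_apply_self (i : ℕ) : sw i i = i + 1 := by rw [sw_apply]; simp

lemma sw_apply_succ (i : ℕ) : sw i (i + 1) = i := by rw [sw_apply]; simp

/-- The set of inversions of `π` inside `[1, n]`. -/
def InvSet (n : ℕ) (π : Equiv.Perm ℕ) : Finset (ℕ × ℕ) :=
  (Finset.Icc 1 n ×ˢ Finset.Icc 1 n).filter (fun pq => pq.1 < pq.2 ∧ π pq.2 < π pq.1)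

/-- The number of inversions of `π` inside `[1, n]`. -/
def invc (n : ℕ) (π : Equiv.Perm ℕ) : ℕ := (InvSet n π).card

lemma invc_one (n : ℕ) : invc n (1 : Equiv.Perm ℕ) = 0 := by
  rw [invc, Finset.card_eq_zero]
  ext ⟨p, q⟩
  simp only [InvSet, Finset.mem_filter, Finset.notMem_empty, iff_false, not_and]
  intro _ h
  simp only [Equiv.Perm.one_apply] at h ⊢
  omega

lemma sw_lt_iff (i x y : ℕ) (h1 : ¬(x = i ∧ y = i + 1)) (h2 : ¬(x = i + 1 ∧ y = i)) :
    (sw i y < sw i x ↔ y < x) := by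
  rw [sw_apply, sw_apply]
  split_ifs <;> omega

lemma invset_swap_asc {n i : ℕ} {π : Equiv.Perm ℕ} (h1 : 1 ≤ i) (h2 : i + 1 ≤ n)
    (hs : Supp n π) (hab : π⁻¹ i < π⁻¹ (i + 1)) :
    InvSet n (sw i * π) = insert (π⁻¹ i, π⁻¹ (i + 1)) (InvSet n π) ∧
      (π⁻¹ i, π⁻¹ (i + 1)) ∉ InvSet n π := by
  set a := π⁻¹ i with ha
  set b := π⁻¹ (i + 1) with hb
  have hpa : π a = i := π.apply_inv_self i
  have hpb : π b = i + 1 := π.apply_inv_self (i + 1)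
  have hmema := supp_inv_apply_mem hs h1 (le_trans (Nat.le_succ i) h2)
  have hmemb := supp_inv_apply_mem hs (by omega : 1 ≤ i + 1) h2
  constructor
  · ext ⟨p, q⟩
    simp only [InvSet, Finset.mem_filter]
    simp only [Finset.mem_filter, Finset.mem_insert, Finset.mem_product,
      Finset.mem_Icc, Equiv.Perm.mul_apply, Prod.mk.injEq]
    constructor
    · rintro ⟨hmem, hpq, hlt⟩
      by_cases hcase : p = a ∧ q = b
      · exact Or.inl hcase
      · refine Or.inr ⟨hmem, hpq, ?_⟩
        have e1 : ¬(π p = i ∧ π q = i + 1) := by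
          rintro ⟨u1, u2⟩
          exact hcase ⟨by rw [ha, ← u1, π.inv_apply_self], by rw [hb, ← u2, π.inv_apply_self]⟩
        have e2 : ¬(π p = i + 1 ∧ π q = i) := by
          rintro ⟨u1, u2⟩
          have : p = b := by rw [hb, ← u1, π.inv_apply_self]
          have : q = a := by rw [ha, ← u2, π.inv_apply_self]
          omega
        rwa [sw_lt_iff i (π p) (π q) e1 e2] at hlt
    · rintro (⟨rfl, rfl⟩ | ⟨hmem, hpq, hlt⟩)
      · refine ⟨⟨⟨hmema.1, hmema.2⟩, hmemb.1, hmemb.2⟩, hab, ?_⟩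
        rw [hpa, hpb, sw_apply_self, sw_apply_succ]
        omega
      · refine ⟨hmem, hpq, ?_⟩
        have e1 : ¬(π p = i ∧ π q = i + 1) := by
          rintro ⟨u1, u2⟩; rw [u1, u2] at hlt; omega
        have e2 : ¬(π p = i + 1 ∧ π q = i) := by
          rintro ⟨u1, u2⟩
          have hp : p = b := by rw [hb, ← u1, π.inv_apply_self]
          have hq : q = a := by rw [ha, ← u2, π.inv_apply_self]
          omega
        rwa [sw_lt_iff i (π p) (π q) e1 e2]
  · simp only [InvSet, Finset.mem_filter, not_and]
    intro _
    rw [hpa, hpb]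
    omega

lemma invc_swap_asc {n i : ℕ} {π : Equiv.Perm ℕ} (h1 : 1 ≤ i) (h2 : i + 1 ≤ n)
    (hs : Supp n π) (hab : π⁻¹ i < π⁻¹ (i + 1)) :
    invc n (sw i * π) = invc n π + 1 := by
  obtain ⟨he, hn⟩ := invset_swap_asc h1 h2 hs hab
  rw [invc, invc, he, Finset.card_insert_of_notMem hn]

lemma invc_swap {n i : ℕ} {π : Equiv.Perm ℕ} (h1 : 1 ≤ i) (h2 : i + 1 ≤ n)
    (hs : Supp n π) :
    (π⁻¹ i < π⁻¹ (i + 1) ∧ invc n (sw i * π) = invc n π + 1) ∨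
    (π⁻¹ (i + 1) < π⁻¹ i ∧ invc n π = invc n (sw i * π) + 1) := by
  have hne : π⁻¹ i ≠ π⁻¹ (i + 1) := fun h => by
    have := π⁻¹.injective h; omega
  rcases lt_or_gt_of_ne hne with h | h
  · exact Or.inl ⟨h, invc_swap_asc h1 h2 hs h⟩
  · right
    refine ⟨h, ?_⟩
    have hσ : Supp n (sw i * π) := supp_sw_mul hs h1 h2
    have hσab : (sw i * π)⁻¹ i < (sw i * π)⁻¹ (i + 1) := by
      rw [sw_mul_inv_apply, sw_mul_inv_apply, sw_apply_self, sw_apply_succ]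
      exact h
    have := invc_swap_asc h1 h2 hσ hσab
    rwa [sw_sw_mul] at this

lemma word_ge_invc {n : ℕ} : ∀ L : List ℕ, (∀ l ∈ L, l ∈ Finset.Icc 1 (n - 1)) →
    invc n (wordProd L) ≤ L.length := by
  intro L
  induction L with
  | nil => intro _; simp [wordProd_nil, invc_one]
  | cons i L ih =>
    intro hmem
    have hi := hmem i (List.mem_cons_self)
    simp only [Finset.mem_Icc] at hi
    have h1 : 1 ≤ i := hi.1
    have h2 : i + 1 ≤ n := by omega
    have hrest : ∀ l ∈ L, l ∈ Finset.Icc 1 (n - 1) := fun l hl => hmem l (List.mem_cons_of_mem i hl)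
    have ihr := ih hrest
    rw [wordProd_cons]
    have hsupp : Supp n (wordProd L) := by
      clear ihr ih hmem
      induction L with
      | nil => exact supp_one n
      | cons j M ihM =>
        have hj := hrest j (List.mem_cons_self)
        simp only [Finset.mem_Icc] at hj
        rw [wordProd_cons]
        exact supp_sw_mul (ihM (fun l hl => hrest l (List.mem_cons_of_mem j hl))) hj.1 (by omega)
    rcases invc_swap h1 h2 hsupp with ⟨_, he⟩ | ⟨_, he⟩ <;> simp only [List.length_cons] <;> omega

lemma wordProd_supp {n : ℕ} : ∀ L : List ℕ, (∀ l ∈ L, l ∈ Finset.Icc 1 (n - 1)) →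
    Supp n (wordProd L) := by
  intro L
  induction L with
  | nil => intro _; exact supp_one n
  | cons j M ihM =>
    intro hmem
    have hj := hmem j (List.mem_cons_self)
    simp only [Finset.mem_Icc] at hj
    rw [wordProd_cons]
    exact supp_sw_mul (ihM (fun l hl => hmem l (List.mem_cons_of_mem j hl))) hj.1 (by omega)

lemma descent_bounds {n : ℕ} {π : Equiv.Perm ℕ} (hs : Supp n π) {i : ℕ}
    (hd : π⁻¹ (i + 1) < π⁻¹ i) : 1 ≤ i ∧ i + 1 ≤ n := by
  have hsi := supp_inv hs
  have h0 : π⁻¹ 0 = 0 := hsi 0 (by simp)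
  constructor
  · by_contra h
    have hi0 : i = 0 := by omega
    rw [hi0] at hd
    omega
  · by_contra h
    have h1 : π⁻¹ (i + 1) = i + 1 := hsi _ (by simp only [Finset.mem_Icc]; omega)
    by_cases hin : i > n
    · have h2 : π⁻¹ i = i := hsi _ (by simp only [Finset.mem_Icc]; omega)
      omega
    · by_cases hi1 : 1 ≤ i
      · have h2 := supp_inv_apply_mem hs hi1 (by omega)
        omega
      · have hi0 : i = 0 := by omega
        rw [hi0] at hd
        omega

lemma descent_exists {n : ℕ} {π : Equiv.Perm ℕ} (hs : Supp n π) (hne : π ≠ 1) :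
    ∃ i, π⁻¹ (i + 1) < π⁻¹ i := by
  by_contra h
  push_neg at h
  -- π⁻¹ is monotone hence strictly monotone
  have hmono : StrictMono (fun x => π⁻¹ x) := by
    apply strictMono_nat_of_lt_succ
    intro m
    have h1 := h m
    have h2 : π⁻¹ m ≠ π⁻¹ (m + 1) := fun he => by have := π⁻¹.injective he; omega
    omega
  -- then π x ≤ x for all x
  have hle : ∀ x, π x ≤ x := by
    intro x
    have h3 : π x ≤ π⁻¹ (π x) := hmono.le_apply
    rwa [π.inv_apply_self] at h3
  -- injectivity forces π = 1
  apply hne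
  ext x
  induction x using Nat.strong_induction_on with
  | _ x ih =>
    simp only [Equiv.Perm.one_apply]
    rcases lt_or_eq_of_le (hle x) with hlt | he
    · have := ih (π x) hlt
      simp only [Equiv.Perm.one_apply] at this
      have := π.injective this
      omega
    · exact he

lemma invc_pos_of_descent {n : ℕ} {π : Equiv.Perm ℕ} (hs : Supp n π) {i : ℕ}
    (hd : π⁻¹ (i + 1) < π⁻¹ i) : 1 ≤ invc n π := by
  have hb := descent_bounds hs hd
  have hma := supp_inv_apply_mem hs (by omega : (1:ℕ) ≤ i) (by omega)
  have hmb := supp_inv_apply_mem hs (by omega : (1:ℕ) ≤ i + 1) (by omega)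
  have hne : (InvSet n π).Nonempty := by
    refine ⟨(π⁻¹ (i + 1), π⁻¹ i), ?_⟩
    simp only [InvSet, Finset.mem_filter, Finset.mem_product, Finset.mem_Icc]
    refine ⟨⟨⟨hmb.1, hmb.2⟩, hma.1, hma.2⟩, hd, ?_⟩
    rw [π.apply_inv_self, π.apply_inv_self]
    omega
  exact hne.card_pos

lemma exists_reduced_word {n : ℕ} : ∀ k (π : Equiv.Perm ℕ), invc n π = k → Supp n π →
    ∃ L : List ℕ, (∀ l ∈ L, l ∈ Finset.Icc 1 (n - 1)) ∧ wordProd L = π ∧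
      L.length = invc n π := by
  intro k
  induction k using Nat.strong_induction_on with
  | _ k ih =>
    intro π hk hs
    by_cases hne : π = 1
    · subst hne
      exact ⟨[], by simp, wordProd_nil, by simp [invc_one]⟩
    · obtain ⟨i, hd⟩ := descent_exists hs hne
      obtain ⟨h1, h2⟩ := descent_bounds hs hd
      set σ := sw i * π with hσdef
      have hsσ : Supp n σ := supp_sw_mul hs h1 h2
      have hinv : invc n π = invc n σ + 1 := by
        rcases invc_swap h1 h2 hs with ⟨hc, _⟩ | ⟨_, hc⟩
        · omega
        · exact hc
      obtain ⟨L, hL1, hL2, hL3⟩ := ih (invc n σ) (by omega) σ rfl hsσ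
      refine ⟨i :: L, ?_, ?_, ?_⟩
      · intro l hl
        rcases List.mem_cons.mp hl with rfl | hl
        · simp only [Finset.mem_Icc]; omega
        · exact hL1 l hl
      · rw [wordProd_cons, hL2, hσdef, sw_sw_mul]
      · simp only [List.length_cons, hL3]; omega

/-- `IsRWord` in terms of the inversion count. -/
lemma isRWord_iff {n : ℕ} {π : Equiv.Perm ℕ} (hs : Supp n π) (L : List ℕ) :
    IsRWord n π L ↔ (∀ l ∈ L, l ∈ Finset.Icc 1 (n - 1)) ∧ wordProd L = π ∧
      L.length = invc n π := by
  constructor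
  · rintro ⟨hmem, hprod, hmin⟩
    refine ⟨hmem, hprod, le_antisymm ?_ ?_⟩
    · obtain ⟨L', h1, h2, h3⟩ := exists_reduced_word (invc n π) π rfl hs
      calc L.length ≤ L'.length := hmin L' h1 h2
      _ = invc n π := h3
    · calc invc n π = invc n (wordProd L) := by rw [hprod]
      _ ≤ L.length := word_ge_invc L hmem
  · rintro ⟨hmem, hprod, hlen⟩
    refine ⟨hmem, hprod, ?_⟩
    intro L' hmem' hprod'
    rw [hlen]
    calc invc n π = invc n (wordProd L') := by rw [hprod']
    _ ≤ L'.length := word_ge_invc L' hmem'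

/-- `π` preserves the initial segment `[0, m]`. -/
def Pres (π : Equiv.Perm ℕ) (m : ℕ) : Prop := ∀ x, x ≤ m → π x ≤ m

lemma pres_inv {π : Equiv.Perm ℕ} {m : ℕ} (h : Pres π m) : Pres π⁻¹ m := by
  intro x hx
  have himg : (Finset.range (m + 1)).image π = Finset.range (m + 1) := by
    apply Finset.eq_of_subset_of_card_le
    · intro y hy
      simp only [Finset.mem_image, Finset.mem_range] at hy ⊢
      obtain ⟨z, hz, rfl⟩ := hy
      have := h z (by omega)
      omega
    · rw [Finset.card_image_of_injective _ π.injective]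
  have hx' : x ∈ (Finset.range (m + 1)).image π := by
    rw [himg]; simp only [Finset.mem_range]; omega
  simp only [Finset.mem_image, Finset.mem_range] at hx'
  obtain ⟨z, hz, hzx⟩ := hx'
  have : π⁻¹ x = z := by rw [← hzx, π.inv_apply_self]
  omega

lemma pres_not_descent {π : Equiv.Perm ℕ} {m : ℕ} (h : Pres π m) :
    ¬ π⁻¹ (m + 1) < π⁻¹ m := by
  intro hd
  have h1 : π⁻¹ m ≤ m := pres_inv h m (le_refl m)
  have h2 : ¬ π⁻¹ (m + 1) ≤ m := by
    intro hle
    have := h _ hle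
    rw [π.apply_inv_self] at this
    omega
  omega

lemma sw_le {i m x : ℕ} (him : i ≠ m) (hx : x ≤ m) : sw i x ≤ m := by
  rw [sw_apply]
  split_ifs <;> omega

lemma pres_sw_mul {π : Equiv.Perm ℕ} {m i : ℕ} (him : i ≠ m) (h : Pres π m) :
    Pres (sw i * π) m := by
  intro x hx
  rw [Equiv.Perm.mul_apply]
  exact sw_le him (h x hx)

lemma pres_word {m : ℕ} : ∀ L : List ℕ, (∀ l ∈ L, l ≠ m) → Pres (wordProd L) m := by
  intro L
  induction L with
  | nil => intro _ x hx; simpa [wordProd_nil] using hx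
  | cons i L ih =>
    intro hmem
    rw [wordProd_cons]
    exact pres_sw_mul (hmem i (List.mem_cons_self))
      (ih (fun l hl => hmem l (List.mem_cons_of_mem i hl)))

/-- avoidance of the pattern `jki` with pivot `m`. -/
def NoPatU (n m : ℕ) (π : Equiv.Perm ℕ) : Prop :=
  ¬∃ p q r : ℕ, 1 ≤ p ∧ p < q ∧ q < r ∧ r ≤ n ∧ π p = m ∧ m < π q ∧ π r < m

/-- avoidance of the pattern `kij` with pivot `m`. -/
def NoPatD (n m : ℕ) (π : Equiv.Perm ℕ) : Prop :=
  ¬∃ p q r : ℕ, 1 ≤ p ∧ p < q ∧ q < r ∧ r ≤ n ∧ m < π p ∧ π q < m ∧ π r = m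

lemma noPatU_one (n m : ℕ) : NoPatU n m 1 := by
  rintro ⟨p, q, r, h1, h2, h3, h4, h5, h6, h7⟩
  simp only [Equiv.Perm.one_apply] at h5 h6 h7
  omega

lemma noPatD_one (n m : ℕ) : NoPatD n m 1 := by
  rintro ⟨p, q, r, h1, h2, h3, h4, h5, h6, h7⟩
  simp only [Equiv.Perm.one_apply] at h5 h6 h7
  omega

/-- letters not adjacent to the pivot preserve the `U`-pattern condition. -/
lemma noPatU_transfer {n m i : ℕ} {π : Equiv.Perm ℕ} (h1 : i ≠ m) (h2 : i + 1 ≠ m)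
    (h : NoPatU n m π) : NoPatU n m (sw i * π) := by
  rintro ⟨p, q, r, hp, hpq, hqr, hr, e5, e6, e7⟩
  simp only [Equiv.Perm.mul_apply] at e5 e6 e7
  apply h
  refine ⟨p, q, r, hp, hpq, hqr, hr, ?_, ?_, ?_⟩
  · rw [sw_apply] at e5; split_ifs at e5 <;> omega
  · rw [sw_apply] at e6; split_ifs at e6 <;> omega
  · rw [sw_apply] at e7; split_ifs at e7 <;> omega

lemma noPatD_transfer {n m i : ℕ} {π : Equiv.Perm ℕ} (h1 : i ≠ m) (h2 : i + 1 ≠ m)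
    (h : NoPatD n m π) : NoPatD n m (sw i * π) := by
  rintro ⟨p, q, r, hp, hpq, hqr, hr, e5, e6, e7⟩
  simp only [Equiv.Perm.mul_apply] at e5 e6 e7
  apply h
  refine ⟨p, q, r, hp, hpq, hqr, hr, ?_, ?_, ?_⟩
  · rw [sw_apply] at e5; split_ifs at e5 <;> omega
  · rw [sw_apply] at e6; split_ifs at e6 <;> omega
  · rw [sw_apply] at e7; split_ifs at e7 <;> omega

lemma eq_inv_of_apply {π : Equiv.Perm ℕ} {p m : ℕ} (h : π p = m) : p = π⁻¹ m := by
  rw [← h, π.inv_apply_self]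

lemma noPatU_advance_sound {n m : ℕ} {π : Equiv.Perm ℕ} (hd : π⁻¹ (m + 1) < π⁻¹ m)
    (h : NoPatU n (m + 1) (sw m * π)) : NoPatU n m π := by
  rintro ⟨p, q, r, hp, hpq, hqr, hr, e5, e6, e7⟩
  apply h
  refine ⟨p, q, r, hp, hpq, hqr, hr, ?_, ?_, ?_⟩
  · rw [Equiv.Perm.mul_apply, e5, sw_apply_self]
  · have hq : π q ≠ m + 1 := by
      intro he
      have := eq_inv_of_apply he
      have := eq_inv_of_apply e5
      omega
    rw [Equiv.Perm.mul_apply, sw_apply]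
    split_ifs <;> omega
  · rw [Equiv.Perm.mul_apply, sw_apply]
    split_ifs <;> omega

lemma noPatU_advance_complete {n m : ℕ} {π : Equiv.Perm ℕ} (hd : π⁻¹ (m + 1) < π⁻¹ m)
    (h : NoPatU n m π) : NoPatU n (m + 1) (sw m * π) := by
  rintro ⟨p, q, r, hp, hpq, hqr, hr, e5, e6, e7⟩
  simp only [Equiv.Perm.mul_apply] at e5 e6 e7
  apply h
  have hp5 : π p = m := by rw [sw_apply] at e5; split_ifs at e5 <;> omega
  have hr7 : π r ≠ m + 1 := by
    intro he
    have := eq_inv_of_apply he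
    have := eq_inv_of_apply hp5
    omega
  refine ⟨p, q, r, hp, hpq, hqr, hr, hp5, ?_, ?_⟩
  · rw [sw_apply] at e6; split_ifs at e6 <;> omega
  · rw [sw_apply] at e7; split_ifs at e7 <;> omega

lemma noPatU_ill_sound {n i : ℕ} {σ : Equiv.Perm ℕ} (h : Pres σ (i + 1)) :
    NoPatU n (i + 1) (sw i * σ) := by
  rintro ⟨p, q, r, hp, hpq, hqr, hr, e5, e6, e7⟩
  simp only [Equiv.Perm.mul_apply] at e5 e6 e7
  have hq : ¬ σ q ≤ i + 1 := by
    rw [sw_apply] at e6; split_ifs at e6 <;> omega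
  have hq2 : ¬ q ≤ i + 1 := fun hle => hq (h q hle)
  have hr2 : σ r ≤ i + 1 := by
    rw [sw_apply] at e7; split_ifs at e7 <;> omega
  have hr3 : r ≤ i + 1 := by
    have := pres_inv h (σ r) hr2
    rwa [σ.inv_apply_self] at this
  omega

lemma noPatD_advance_sound {n i : ℕ} {π : Equiv.Perm ℕ} (hd : π⁻¹ (i + 1) < π⁻¹ i)
    (h : NoPatD n i (sw i * π)) : NoPatD n (i + 1) π := by
  rintro ⟨p, q, r, hp, hpq, hqr, hr, e5, e6, e7⟩
  apply h
  have hq : π q ≠ i := by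
    intro he
    have := eq_inv_of_apply he
    have := eq_inv_of_apply e7
    omega
  refine ⟨p, q, r, hp, hpq, hqr, hr, ?_, ?_, ?_⟩
  · rw [Equiv.Perm.mul_apply, sw_apply]
    split_ifs <;> omega
  · rw [Equiv.Perm.mul_apply, sw_apply]
    split_ifs <;> omega
  · rw [Equiv.Perm.mul_apply, e7, sw_apply_succ]

lemma noPatD_advance_complete {n i : ℕ} {π : Equiv.Perm ℕ} (hd : π⁻¹ (i + 1) < π⁻¹ i)
    (h : NoPatD n (i + 1) π) : NoPatD n i (sw i * π) := by
  rintro ⟨p, q, r, hp, hpq, hqr, hr, e5, e6, e7⟩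
  simp only [Equiv.Perm.mul_apply] at e5 e6 e7
  apply h
  have hr7 : π r = i + 1 := by rw [sw_apply] at e7; split_ifs at e7 <;> omega
  have hp5 : π p ≠ i := by
    intro he
    have := eq_inv_of_apply he
    have := eq_inv_of_apply hr7
    omega
  refine ⟨p, q, r, hp, hpq, hqr, hr, ?_, ?_, hr7⟩
  · rw [sw_apply] at e5; split_ifs at e5 <;> omega
  · rw [sw_apply] at e6; split_ifs at e6 <;> omega

lemma noPatD_ill_sound {n m : ℕ} {σ : Equiv.Perm ℕ} (hm : 1 ≤ m) (h : Pres σ (m - 1)) :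
    NoPatD n m (sw m * σ) := by
  rintro ⟨p, q, r, hp, hpq, hqr, hr, e5, e6, e7⟩
  simp only [Equiv.Perm.mul_apply] at e5 e6 e7
  have hq : σ q ≤ m - 1 := by
    rw [sw_apply] at e6; split_ifs at e6 <;> omega
  have hq2 : q ≤ m - 1 := by
    have := pres_inv h (σ q) hq
    rwa [σ.inv_apply_self] at this
  have hp2 : σ p ≤ m - 1 := h p (by omega)
  rw [sw_apply] at e5
  split_ifs at e5 <;> omega

lemma Ufoldl_dead (L : List ℕ) : L.foldl Ustep .dead = .dead := by
  induction L with
  | nil => rfl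
  | cons i L ih => simpa [Ustep] using ih

lemma Dfoldl_dead (L : List ℕ) : L.foldl Dstep .dead = .dead := by
  induction L with
  | nil => rfl
  | cons i L ih => simpa [Dstep] using ih

lemma Uill_survive {m : ℕ} : ∀ L : List ℕ, L.foldl Ustep (.ill m) ≠ .dead → m ∉ L := by
  intro L
  induction L with
  | nil => intro _; simp
  | cons i L ih =>
    intro h
    simp only [List.foldl_cons, Ustep] at h
    by_cases him : i = m
    · rw [if_pos him, Ufoldl_dead] at h
      exact absurd rfl h
    · rw [if_neg him] at h
      intro hmem
      rcases List.mem_cons.mp hmem with he | hmem'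
      · exact him he.symm
      · exact ih h hmem'

lemma Dill_survive {m : ℕ} : ∀ L : List ℕ, L.foldl Dstep (.ill m) ≠ .dead →
    ∀ i ∈ L, i + 1 ≠ m := by
  intro L
  induction L with
  | nil => intro _; simp
  | cons i L ih =>
    intro h j hj
    simp only [List.foldl_cons, Dstep] at h
    by_cases him : i + 1 = m
    · rw [if_pos him, Dfoldl_dead] at h
      exact absurd rfl h
    · rw [if_neg him] at h
      rcases List.mem_cons.mp hj with rfl | hmem'
      · exact him
      · exact ih h j hmem'

/-- key step extraction: in a reduced word, the first letter is a descent. -/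
lemma reduced_head {n i : ℕ} {L : List ℕ} {π : Equiv.Perm ℕ}
    (hmem : ∀ l ∈ (i :: L), l ∈ Finset.Icc 1 (n - 1))
    (hprod : wordProd (i :: L) = π) (hlen : (i :: L).length = invc n π) :
    π⁻¹ (i + 1) < π⁻¹ i ∧ wordProd L = sw i * π ∧
      L.length = invc n (sw i * π) ∧ Supp n π := by
  have hi := hmem i (List.mem_cons_self)
  simp only [Finset.mem_Icc] at hi
  have h1 : 1 ≤ i := hi.1
  have h2 : i + 1 ≤ n := by omega
  have hmemL : ∀ l ∈ L, l ∈ Finset.Icc 1 (n - 1) := fun l hl => hmem l (List.mem_cons_of_mem i hl)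
  have hsL : Supp n (wordProd L) := wordProd_supp L hmemL
  have hprodL : sw i * π = wordProd L := by
    rw [← hprod, wordProd_cons, sw_sw_mul]
  have hsπ : Supp n π := by
    rw [← hprod, wordProd_cons]
    exact supp_sw_mul hsL h1 h2
  have hgeL := word_ge_invc L hmemL
  have hlen' : L.length + 1 = invc n π := by simpa using hlen
  rcases invc_swap h1 h2 hsπ with ⟨hc, he⟩ | ⟨hc, he⟩
  · -- ascent case: impossible by counting
    rw [hprodL] at he
    omega
  · refine ⟨hc, hprodL.symm, ?_, hsπ⟩
    rw [hprodL] at he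
    rw [hprodL]
    omega

lemma soundU {n : ℕ} : ∀ L : List ℕ, ∀ (π : Equiv.Perm ℕ) (m : ℕ),
    (∀ l ∈ L, l ∈ Finset.Icc 1 (n - 1)) → wordProd L = π → L.length = invc n π →
    L.foldl Ustep (.healthy m) ≠ .dead → NoPatU n m π := by
  intro L
  induction L with
  | nil =>
    intro π m _ hprod _ _
    rw [← hprod, wordProd_nil]
    exact noPatU_one n m
  | cons i L ih =>
    intro π m hmem hprod hlen hrun
    obtain ⟨hdesc, hprodL, hlenL, hsπ⟩ := reduced_head hmem hprod hlen
    simp only [List.foldl_cons, Ustep] at hrun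
    by_cases he1 : i = m
    · rw [if_pos he1] at hrun
      subst he1
      have hIH := ih (sw i * π) (i + 1) (fun l hl => hmem l (List.mem_cons_of_mem i hl))
        hprodL hlenL hrun
      exact noPatU_advance_sound hdesc hIH
    · rw [if_neg he1] at hrun
      by_cases he2 : i + 1 = m
      · rw [if_pos he2] at hrun
        have hnotin := Uill_survive L hrun
        have hpres : Pres (wordProd L) m := pres_word L (fun l hl => fun hc => hnotin (hc ▸ hl))
        rw [hprodL] at hpres
        have := noPatU_ill_sound (i := i) (n := n) (he2 ▸ hpres)
        rw [he2, sw_sw_mul] at this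
        exact this
      · rw [if_neg he2] at hrun
        have hIH := ih (sw i * π) m (fun l hl => hmem l (List.mem_cons_of_mem i hl))
          hprodL hlenL hrun
        have := noPatU_transfer he1 he2 hIH
        rwa [sw_sw_mul] at this

lemma soundD {n : ℕ} : ∀ L : List ℕ, ∀ (π : Equiv.Perm ℕ) (m : ℕ),
    (∀ l ∈ L, l ∈ Finset.Icc 1 (n - 1)) → wordProd L = π → L.length = invc n π →
    L.foldl Dstep (.healthy m) ≠ .dead → NoPatD n m π := by
  intro L
  induction L with
  | nil =>
    intro π m _ hprod _ _
    rw [← hprod, wordProd_nil]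
    exact noPatD_one n m
  | cons i L ih =>
    intro π m hmem hprod hlen hrun
    obtain ⟨hdesc, hprodL, hlenL, hsπ⟩ := reduced_head hmem hprod hlen
    have hi := hmem i (List.mem_cons_self)
    simp only [Finset.mem_Icc] at hi
    simp only [List.foldl_cons, Dstep] at hrun
    by_cases he1 : i + 1 = m
    · rw [if_pos he1] at hrun
      have hIH := ih (sw i * π) i (fun l hl => hmem l (List.mem_cons_of_mem i hl))
        hprodL hlenL hrun
      have := noPatD_advance_sound hdesc hIH
      rwa [he1] at this
    · rw [if_neg he1] at hrun
      by_cases he2 : i = m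
      · rw [if_pos he2] at hrun
        have hforb := Dill_survive L hrun
        have hpres : Pres (wordProd L) (m - 1) := by
          apply pres_word
          intro l hl hc
          exact hforb l hl (by omega)
        rw [hprodL] at hpres
        subst he2
        have := noPatD_ill_sound (n := n) hi.1 hpres
        rwa [sw_sw_mul] at this
      · rw [if_neg he2] at hrun
        have hIH := ih (sw i * π) m (fun l hl => hmem l (List.mem_cons_of_mem i hl))
          hprodL hlenL hrun
        have := noPatD_transfer he2 he1 hIH
        rwa [sw_sw_mul] at this

lemma chain_mono {π : Equiv.Perm ℕ} {v w : ℕ} (hvw : v ≤ w)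
    (h : ∀ t, v ≤ t → t < w → ¬ π⁻¹ (t + 1) < π⁻¹ t) : π⁻¹ v ≤ π⁻¹ w := by
  induction w, hvw using Nat.le_induction with
  | base => exact le_refl _
  | succ w hvw ih =>
    have h1 := ih (fun t ht1 ht2 => h t ht1 (by omega))
    have h2 := h w hvw (by omega)
    omega

lemma exists_descent_between {π : Equiv.Perm ℕ} {v w : ℕ} (hvw : v ≤ w)
    (hlt : π⁻¹ w < π⁻¹ v) : ∃ t, v ≤ t ∧ t < w ∧ π⁻¹ (t + 1) < π⁻¹ t := by
  by_contra hc
  push_neg at hc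
  have := chain_mono (π := π) hvw (fun t ht1 ht2 hx => by have := hc t ht1 ht2; omega)
  omega

lemma Ua {n u : ℕ} {π : Equiv.Perm ℕ} (hs : Supp n π) (hA : NoPatU n u π)
    (hnp : ¬ Pres π u) : ∃ x, 1 ≤ x ∧ x < π⁻¹ u ∧ u < π x := by
  rw [Pres] at hnp; push_neg at hnp
  obtain ⟨x₀, hx₀u, hx₀⟩ := hnp
  have hx₀1 : 1 ≤ x₀ := by
    by_contra h
    have hz : x₀ = 0 := by omega
    rw [hz, hs 0 (by simp)] at hx₀
    omega
  have hx₀n : x₀ ≤ n := by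
    by_contra h
    rw [hs x₀ (by simp only [Finset.mem_Icc]; omega)] at hx₀
    omega
  have hπx₀ := supp_apply_mem hs hx₀1 hx₀n
  have hu1 : 1 ≤ u := le_trans hx₀1 hx₀u
  have hun : u ≤ n := by omega
  have ha := supp_inv_apply_mem hs hu1 hun
  have hax : x₀ ≠ π⁻¹ u := by
    intro he
    rw [he, π.apply_inv_self] at hx₀
    omega
  by_cases hlt : x₀ < π⁻¹ u
  · exact ⟨x₀, hx₀1, hlt, hx₀⟩
  · exfalso
    have hax' : π⁻¹ u < x₀ := by omega
    by_cases hex : ∃ r, x₀ < r ∧ r ≤ n ∧ π r < u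
    · obtain ⟨r, hr1, hr2, hr3⟩ := hex
      exact hA ⟨π⁻¹ u, x₀, r, ha.1, hax', hr1, hr2, π.apply_inv_self u, hx₀, hr3⟩
    · push_neg at hex
      have h1 : (π x₀) ∉ Finset.Icc 1 (u - 1) := by
        simp only [Finset.mem_Icc]; omega
      have h2 : u ∉ insert (π x₀) (Finset.Icc 1 (u - 1)) := by
        simp only [Finset.mem_insert, Finset.mem_Icc]; omega
      have hcard : (insert u (insert (π x₀) (Finset.Icc 1 (u - 1)))).card = u + 1 := by
        rw [Finset.card_insert_of_notMem h2, Finset.card_insert_of_notMem h1, Nat.card_Icc]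
        omega
      have hmapsto : ∀ v ∈ insert u (insert (π x₀) (Finset.Icc 1 (u - 1))),
          π⁻¹ v ∈ Finset.Icc 1 x₀ := by
        intro v hv
        simp only [Finset.mem_insert, Finset.mem_Icc] at hv
        simp only [Finset.mem_Icc]
        rcases hv with rfl | rfl | ⟨hv1, hv2⟩
        · omega
        · rw [π.inv_apply_self]; omega
        · have hvmem := supp_inv_apply_mem hs hv1 (by omega)
          refine ⟨hvmem.1, ?_⟩
          by_contra hc
          have := hex (π⁻¹ v) (by omega) hvmem.2
          rw [π.apply_inv_self] at this
          omega
      have hinj : Set.InjOn (⇑π⁻¹) ((insert u (insert (π x₀) (Finset.Icc 1 (u - 1)))) : Finset ℕ) :=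
        fun a _ b _ h => π⁻¹.injective h
      have hle := Finset.card_le_card_of_injOn _ hmapsto hinj
      rw [hcard, Nat.card_Icc] at hle
      omega

lemma Ustar {n u : ℕ} {π : Equiv.Perm ℕ} (hs : Supp n π) (hA : NoPatU n u π)
    (hnp : ¬ Pres π u) : ∃ t, u ≤ t ∧ π⁻¹ (t + 1) < π⁻¹ t := by
  obtain ⟨x, hx1, hx2, hx3⟩ := Ua hs hA hnp
  obtain ⟨t, ht1, ht2, ht3⟩ := exists_descent_between (le_of_lt hx3)
    (by rw [π.inv_apply_self]; exact hx2)
  exact ⟨t, ht1, ht3⟩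

lemma Dstar {n d : ℕ} {π : Equiv.Perm ℕ} (hs : Supp n π) (hA : NoPatD n d π)
    (hnp : ¬ Pres π (d - 1)) (hd1 : 1 ≤ d) (hdn : d ≤ n) :
    ∃ s, s < d ∧ π⁻¹ (s + 1) < π⁻¹ s := by
  have hnpi : ¬ Pres π⁻¹ (d - 1) := by
    intro h
    have := pres_inv h
    rw [inv_inv] at this
    exact hnp this
  rw [Pres] at hnpi; push_neg at hnpi
  obtain ⟨v, hv1, hv2⟩ := hnpi
  have hv0 : 1 ≤ v := by
    by_contra h
    have h0 : π⁻¹ 0 = 0 := supp_inv hs 0 (by simp)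
    have hz : v = 0 := by omega
    rw [hz, h0] at hv2
    omega
  have hyv : π (π⁻¹ v) = v := π.apply_inv_self v
  have hyn : π⁻¹ v ≤ n := (supp_inv_apply_mem hs hv0 (by omega)).2
  have hbmem := supp_inv_apply_mem hs hd1 hdn
  have hbv : π (π⁻¹ d) = d := π.apply_inv_self d
  have hyneb : π⁻¹ v ≠ π⁻¹ d := by
    intro he
    have := π⁻¹.injective he
    omega
  by_cases hyb2 : π⁻¹ v < π⁻¹ d
  · exfalso
    by_cases hex : ∃ p, 1 ≤ p ∧ p < π⁻¹ v ∧ d < π p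
    · obtain ⟨p, hp1, hp2, hp3⟩ := hex
      exact hA ⟨p, π⁻¹ v, π⁻¹ d, hp1, hp2, hyb2, hbmem.2, hp3, by omega, hbv⟩
    · push_neg at hex
      have h1 : d ∉ Finset.Icc (d + 1) n := by simp only [Finset.mem_Icc]; omega
      have h2 : v ∉ insert d (Finset.Icc (d + 1) n) := by
        simp only [Finset.mem_insert, Finset.mem_Icc]; omega
      have hcard : (insert v (insert d (Finset.Icc (d + 1) n))).card = n - d + 2 := by
        rw [Finset.card_insert_of_notMem h2, Finset.card_insert_of_notMem h1, Nat.card_Icc]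
        omega
      have hmapsto : ∀ w ∈ insert v (insert d (Finset.Icc (d + 1) n)),
          π⁻¹ w ∈ Finset.Icc (π⁻¹ v) n := by
        intro w hw
        simp only [Finset.mem_insert, Finset.mem_Icc] at hw
        simp only [Finset.mem_Icc]
        rcases hw with rfl | rfl | ⟨hw1, hw2⟩
        · omega
        · omega
        · have hwmem := supp_inv_apply_mem hs (by omega) hw2
          refine ⟨?_, hwmem.2⟩
          by_contra hc
          have := hex (π⁻¹ w) hwmem.1 (by omega)
          rw [π.apply_inv_self] at this
          omega
      have hinj : Set.InjOn (⇑π⁻¹) ((insert v (insert d (Finset.Icc (d + 1) n))) : Finset ℕ) :=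
        fun a _ b _ h => π⁻¹.injective h
      have hle := Finset.card_le_card_of_injOn _ hmapsto hinj
      rw [hcard, Nat.card_Icc] at hle
      omega
  · have hbly : π⁻¹ d < π⁻¹ v := by omega
    obtain ⟨t, ht1, ht2, ht3⟩ := exists_descent_between (v := v) (w := d) (by omega) hbly
    exact ⟨t, by omega, ht3⟩

lemma interaction {n u d : ℕ} {π : Equiv.Perm ℕ} (hs : Supp n π) (hA : NoPatU n u π)
    (hnp : ¬ Pres π u) (hA' : NoPatD n d π) (hud : u < d) (hdn : d ≤ n)
    (hnodesc : ∀ t, u ≤ t → t < d → ¬ π⁻¹ (t + 1) < π⁻¹ t) : False := by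
  obtain ⟨x, hx1, hx2, hx3⟩ := Ua hs hA hnp
  have hab : π⁻¹ u ≤ π⁻¹ d := chain_mono (le_of_lt hud) hnodesc
  have hab' : π⁻¹ u ≠ π⁻¹ d := by
    intro h
    have := π⁻¹.injective h
    omega
  have hwd : d < π x := by
    by_contra hc
    push_neg at hc
    have h1 : π⁻¹ u ≤ π⁻¹ (π x) :=
      chain_mono (le_of_lt hx3) (fun t ht1 ht2 => hnodesc t ht1 (by omega))
    rw [π.inv_apply_self] at h1
    omega
  exact hA' ⟨x, π⁻¹ u, π⁻¹ d, hx1, hx2, by omega,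
    (supp_inv_apply_mem hs (by omega) hdn).2, hwd,
    by rw [π.apply_inv_self]; omega, π.apply_inv_self d⟩

lemma keyLemma {n : ℕ} {π : Equiv.Perm ℕ} (hs : Supp n π) (hne : π ≠ 1)
    (UH DH : Finset ℕ) (hdis : Disjoint UH DH)
    (hU : ∀ u ∈ UH, NoPatU n u π) (hD : ∀ d ∈ DH, NoPatD n d π) :
    ∃ i, 1 ≤ i ∧ i + 1 ≤ n ∧ π⁻¹ (i + 1) < π⁻¹ i ∧
      (∀ u ∈ UH, i + 1 = u → Pres π u) ∧ (∀ d ∈ DH, i = d → Pres π (d - 1)) := by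
  by_contra hcon
  push_neg at hcon
  have hbad : ∀ i, π⁻¹ (i + 1) < π⁻¹ i →
      (∃ u ∈ UH, i + 1 = u ∧ ¬ Pres π u) ∨ (∃ d ∈ DH, i = d ∧ ¬ Pres π (d - 1)) := by
    intro i hd
    have hb := descent_bounds hs hd
    by_cases hu : ∀ u ∈ UH, i + 1 = u → Pres π u
    · right
      obtain ⟨d, hd1, hd2, hd3⟩ := hcon i hb.1 hb.2 hd hu
      exact ⟨d, hd1, hd2, hd3⟩
    · left
      push_neg at hu
      obtain ⟨u, h1, h2, h3⟩ := hu
      exact ⟨u, h1, h2, h3⟩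
  classical
  set Des : Finset ℕ := (Finset.Icc 1 n).filter (fun i => π⁻¹ (i + 1) < π⁻¹ i) with hDes
  have hmemD : ∀ i, π⁻¹ (i + 1) < π⁻¹ i → i ∈ Des := by
    intro i hd
    have hb := descent_bounds hs hd
    simp only [hDes, Finset.mem_filter, Finset.mem_Icc]
    exact ⟨⟨hb.1, by omega⟩, hd⟩
  have hdesD : ∀ i ∈ Des, π⁻¹ (i + 1) < π⁻¹ i := fun i hi => (Finset.mem_filter.mp hi).2
  have C1 : ∀ t, π⁻¹ (t + 1) < π⁻¹ t → t ∈ DH → ¬ Pres π (t - 1) → False := by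
    intro t
    induction t using Nat.strong_induction_on with
    | _ t IH =>
      intro hdes htD hnp
      have hb := descent_bounds hs hdes
      obtain ⟨s, hst, hsdes⟩ := Dstar hs (hD t htD) hnp (by omega) (by omega)
      have hSne : s ∈ Des.filter (fun j => j < t) := by
        simp only [Finset.mem_filter]
        exact ⟨hmemD s hsdes, hst⟩
      have ht'mem := (Des.filter (fun j => j < t)).max'_mem ⟨s, hSne⟩
      set t' := (Des.filter (fun j => j < t)).max' ⟨s, hSne⟩ with ht'
      simp only [Finset.mem_filter] at ht'mem
      have ht'des := hdesD t' ht'mem.1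
      have ht'lt : t' < t := ht'mem.2
      rcases hbad t' ht'des with ⟨u, huU, huv, hnpu⟩ | ⟨d, hdD, hdv, hnpd⟩
      · have hud : u ≠ t := fun he => Finset.disjoint_left.mp hdis huU (he ▸ htD)
        have hult : u < t := by omega
        apply interaction hs (hU u huU) hnpu (hD t htD) hult (by omega)
        intro s' hs1 hs2 hdes'
        have hmem' : s' ∈ Des.filter (fun j => j < t) := by
          simp only [Finset.mem_filter]
          exact ⟨hmemD s' hdes', hs2⟩
        have := (Des.filter (fun j => j < t)).le_max' s' hmem'
        omega
      · exact IH t' ht'lt ht'des (by rw [hdv]; exact hdD) (by rw [hdv]; exact hnpd)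
  obtain ⟨i0, hi0⟩ := descent_exists hs hne
  have hDesne : Des.Nonempty := ⟨i0, hmemD i0 hi0⟩
  have hMmem := Des.max'_mem hDesne
  set M := Des.max' hDesne with hM
  have hMdes := hdesD M hMmem
  rcases hbad M hMdes with ⟨u, huU, huv, hnpu⟩ | ⟨d, hdD, hdv, hnpd⟩
  · obtain ⟨t, htu, htdes⟩ := Ustar hs (hU u huU) hnpu
    have := Des.le_max' t (hmemD t htdes)
    omega
  · exact C1 M hMdes (by rw [hdv]; exact hdD) (by rw [hdv]; exact hnpd)

lemma complete {n : ℕ} : ∀ k (π : Equiv.Perm ℕ) (UH UI DH DI : Finset ℕ),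
    invc n π = k → Supp n π → Disjoint UH DH →
    (∀ u ∈ UH, NoPatU n u π) → (∀ u ∈ UI, Pres π u) →
    (∀ d ∈ DH, NoPatD n d π) → (∀ d ∈ DI, Pres π (d - 1)) →
    ∃ L : List ℕ, (∀ l ∈ L, l ∈ Finset.Icc 1 (n - 1)) ∧ wordProd L = π ∧ L.length = k ∧
      (∀ u ∈ UH, L.foldl Ustep (.healthy u) ≠ .dead) ∧
      (∀ u ∈ UI, L.foldl Ustep (.ill u) ≠ .dead) ∧
      (∀ d ∈ DH, L.foldl Dstep (.healthy d) ≠ .dead) ∧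
      (∀ d ∈ DI, L.foldl Dstep (.ill d) ≠ .dead) := by
  intro k
  induction k using Nat.strong_induction_on with
  | _ k IH =>
    intro π UH UI DH DI hk hs hdis hUH hUI hDH hDI
    by_cases hne : π = 1
    · subst hne
      have hk0 : k = 0 := by rw [invc_one] at hk; omega
      refine ⟨[], by simp, wordProd_nil, by simp [hk0], ?_, ?_, ?_, ?_⟩
      · exact fun u _ h => AState.noConfusion h
      · exact fun u _ h => AState.noConfusion h
      · exact fun d _ h => AState.noConfusion h
      · exact fun d _ h => AState.noConfusion h
    · obtain ⟨i, hi1, hi2, hdesc, hgoodU, hgoodD⟩ := keyLemma hs hne UH DH hdis hUH hDH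
      set π' := sw i * π with hπ'
      have hπback : sw i * π' = π := sw_sw_mul i π
      have hsπ' : Supp n π' := supp_sw_mul hs hi1 hi2
      have hinv : invc n π = invc n π' + 1 := by
        rcases invc_swap hi1 hi2 hs with ⟨hc, _⟩ | ⟨_, hc⟩
        · omega
        · exact hc
      classical
      set UH' := (UH.filter (fun u => u ≠ i + 1)).image (fun u => if u = i then u + 1 else u)
        with hUH'
      set UI' := UI ∪ UH.filter (fun u => u = i + 1) with hUI'
      set DH' := (DH.filter (fun d => d ≠ i)).image (fun d => if d = i + 1 then i else d)
        with hDH'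
      set DI' := DI ∪ DH.filter (fun d => d = i) with hDI'
      have hdis' : Disjoint UH' DH' := by
        rw [Finset.disjoint_left]
        intro z hzU hzD
        rw [hUH'] at hzU
        rw [hDH'] at hzD
        simp only [Finset.mem_image, Finset.mem_filter] at hzU hzD
        obtain ⟨u, ⟨huU, hune⟩, hzu⟩ := hzU
        obtain ⟨d, ⟨hdD, hdne⟩, hzd⟩ := hzD
        have hud : u ≠ d := fun he => Finset.disjoint_left.mp hdis huU (he ▸ hdD)
        split_ifs at hzu hzd <;> omega
      have hUH'inv : ∀ u' ∈ UH', NoPatU n u' π' := by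
        intro u' hu'
        rw [hUH'] at hu'
        simp only [Finset.mem_image, Finset.mem_filter] at hu'
        obtain ⟨u, ⟨huU, hune⟩, hzu⟩ := hu'
        by_cases h1 : u = i
        · subst h1
          rw [if_pos rfl] at hzu
          subst hzu
          exact noPatU_advance_complete hdesc (hUH u huU)
        · rw [if_neg h1] at hzu
          subst hzu
          exact noPatU_transfer (fun he => h1 he.symm) (fun he => hune he.symm) (hUH u huU)
      have hUI'inv : ∀ u ∈ UI', Pres π' u := by
        intro u hu
        rw [hUI'] at hu
        simp only [Finset.mem_union, Finset.mem_filter] at hu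
        rcases hu with hu | ⟨huU, rfl⟩
        · have hp := hUI u hu
          have hne2 : i ≠ u := fun he => pres_not_descent hp (he ▸ hdesc)
          exact pres_sw_mul hne2 hp
        · exact pres_sw_mul (by omega) (hgoodU _ huU rfl)
      have hDH'inv : ∀ d' ∈ DH', NoPatD n d' π' := by
        intro d' hd'
        rw [hDH'] at hd'
        simp only [Finset.mem_image, Finset.mem_filter] at hd'
        obtain ⟨d, ⟨hdD, hdne⟩, hzd⟩ := hd'
        by_cases h1 : d = i + 1
        · subst h1
          rw [if_pos rfl] at hzd
          subst hzd
          exact noPatD_advance_complete hdesc (hDH _ hdD)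
        · rw [if_neg h1] at hzd
          subst hzd
          exact noPatD_transfer (fun he => hdne he.symm) (fun he => h1 he.symm) (hDH d hdD)
      have hDI'inv : ∀ d ∈ DI', Pres π' (d - 1) := by
        intro d hd
        rw [hDI'] at hd
        simp only [Finset.mem_union, Finset.mem_filter] at hd
        rcases hd with hd | ⟨hdD, rfl⟩
        · have hp := hDI d hd
          have hne2 : i ≠ d - 1 := fun he => pres_not_descent hp (he ▸ hdesc)
          exact pres_sw_mul hne2 hp
        · exact pres_sw_mul (by omega) (hgoodD _ hdD rfl)
      obtain ⟨L, hL1, hL2, hL3, hLUH, hLUI, hLDH, hLDI⟩ :=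
        IH (invc n π') (by omega) π' UH' UI' DH' DI' rfl hsπ' hdis' hUH'inv hUI'inv
          hDH'inv hDI'inv
      refine ⟨i :: L, ?_, ?_, ?_, ?_, ?_, ?_, ?_⟩
      · intro l hl
        rcases List.mem_cons.mp hl with rfl | hl
        · simp only [Finset.mem_Icc]; omega
        · exact hL1 l hl
      · rw [wordProd_cons, hL2, hπback]
      · simp only [List.length_cons, hL3]; omega
      · intro u hu
        simp only [List.foldl_cons, Ustep]
        by_cases h1 : i = u
        · rw [if_pos h1]
          apply hLUH
          rw [hUH']
          exact Finset.mem_image.mpr ⟨u, Finset.mem_filter.mpr ⟨hu, by omega⟩,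
            by rw [if_pos h1.symm]⟩
        · rw [if_neg h1]
          by_cases h2 : i + 1 = u
          · rw [if_pos h2]
            apply hLUI
            rw [hUI']
            exact Finset.mem_union_right _ (Finset.mem_filter.mpr ⟨hu, h2.symm⟩)
          · rw [if_neg h2]
            apply hLUH
            rw [hUH']
            exact Finset.mem_image.mpr ⟨u, Finset.mem_filter.mpr ⟨hu, fun he => h2 he.symm⟩,
              by rw [if_neg (fun he => h1 he.symm)]⟩
      · intro u hu
        simp only [List.foldl_cons, Ustep]
        have hne2 : i ≠ u := fun he => pres_not_descent (hUI u hu) (he ▸ hdesc)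
        rw [if_neg hne2]
        apply hLUI
        rw [hUI']
        exact Finset.mem_union_left _ hu
      · intro d hd
        simp only [List.foldl_cons, Dstep]
        by_cases h1 : i + 1 = d
        · rw [if_pos h1]
          apply hLDH
          rw [hDH']
          exact Finset.mem_image.mpr ⟨d, Finset.mem_filter.mpr ⟨hd, by omega⟩,
            by rw [if_pos h1.symm]⟩
        · rw [if_neg h1]
          by_cases h2 : i = d
          · rw [if_pos h2]
            apply hLDI
            rw [hDI']
            exact Finset.mem_union_right _ (Finset.mem_filter.mpr ⟨hd, h2.symm⟩)
          · rw [if_neg h2]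
            apply hLDH
            rw [hDH']
            exact Finset.mem_image.mpr ⟨d, Finset.mem_filter.mpr ⟨hd, fun he => h2 he.symm⟩,
              by rw [if_neg (fun he => h1 he.symm)]⟩
      · intro d hd
        simp only [List.foldl_cons, Dstep]
        have hne2 : i + 1 ≠ d := by
          intro he
          apply pres_not_descent (hDI d hd)
          have hid : i = d - 1 := by omega
          rw [← hid]
          exact hdesc
        rw [if_neg hne2]
        apply hLDI
        rw [hDI']
        exact Finset.mem_union_left _ hd

/-- Let `U, D` be disjoint subsets of `[2, n-1]` and `π ∈ S_n`.  Then `π` has a single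
reduced word simultaneously accepted by all automata `𝕌(j)` for `j ∈ U` and `𝔻(j)` for
`j ∈ D` if and only if `π` avoids the patterns `jki` for all `j ∈ U` and `kij` for all
`j ∈ D` (with `i < j < k`). -/
theorem permutree_automata_product (n : ℕ) (U D : Finset ℕ)
    (hU : ∀ j ∈ U, 2 ≤ j ∧ j ≤ n - 1) (hD : ∀ j ∈ D, 2 ≤ j ∧ j ≤ n - 1)
    (hUD : Disjoint U D)
    (π : Equiv.Perm ℕ) (hπ : ∀ x : ℕ, x ∉ Finset.Icc 1 n → π x = x) :
    (∃ L : List ℕ, IsRWord n π L ∧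
        (∀ j ∈ U, Urun j L ≠ AState.dead) ∧ (∀ j ∈ D, Drun j L ≠ AState.dead)) ↔
      ((∀ j ∈ U, ¬∃ p q r : ℕ, 1 ≤ p ∧ p < q ∧ q < r ∧ r ≤ n ∧
          π p = j ∧ j < π q ∧ π r < j) ∧
       (∀ j ∈ D, ¬∃ p q r : ℕ, 1 ≤ p ∧ p < q ∧ q < r ∧ r ≤ n ∧
          j < π p ∧ π q < j ∧ π r = j)) := by
  have hs : Supp n π := hπ
  constructor
  · rintro ⟨L, hL, hUs, hDs⟩
    obtain ⟨hmem, hprod, hlen⟩ := (isRWord_iff hs L).mp hL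
    constructor
    · intro j hj
      exact soundU L π j hmem hprod hlen (hUs j hj)
    · intro j hj
      exact soundD L π j hmem hprod hlen (hDs j hj)
  · rintro ⟨hUavoid, hDavoid⟩
    obtain ⟨L, h1, h2, h3, h4, h5, h6, h7⟩ := complete (invc n π) π U ∅ D ∅ rfl hs hUD
      (fun j hj => hUavoid j hj) (fun u hu => absurd hu (Finset.notMem_empty u))
      (fun j hj => hDavoid j hj) (fun d hd => absurd hd (Finset.notMem_empty d))
    exact ⟨L, (isRWord_iff hs L).mpr ⟨h1, h2, by rw [h3]⟩,
      fun j hj => h4 j hj, fun j hj => h6 j hj⟩
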